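/- Let F be a Wetzel family and λ < 2^ℵ₀ a cardinal. Then the set of complex numbers z with |{f(z) : f ∈ F}| < λ has cardinality strictly less than 2^ℵ₀. -/

import Mathlib

def IsWetzel (F : Set (ℂ → ℂ)) : Prop :=
  (∀ f ∈ F, Differentiable ℂ f) ∧
    ∀ z : ℂ, Cardinal.mk ((fun f : ℂ → ℂ => f z) '' F) < Cardinal.mk F

open Cardinal Set

/-- Two distinct entire functions agree on a countable set. -/
lemma countable_agreement {f g : ℂ → ℂ} (hf : Differentiable ℂ f)
    (hg : Differentiable ℂ g) (hne : f ≠ g) : {z : ℂ | f z = g z}.Countable := by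
  set s : Set ℂ := {z : ℂ | f z = g z}
  have hdisc : DiscreteTopology s := by
    rw [discreteTopology_subtype_iff]
    intro z hz
    rcases (hf.analyticAt z).eventually_eq_or_eventually_ne (hg.analyticAt z) with h | h
    · exfalso
      apply hne
      funext w
      exact (Complex.analyticOnNhd_univ_iff_differentiable.mpr hf).eqOn_of_preconnected_of_eventuallyEq
        (Complex.analyticOnNhd_univ_iff_differentiable.mpr hg) isPreconnected_univ (mem_univ z) h
        (mem_univ w)
    · rw [← Filter.empty_mem_iff_bot]
      filter_upwards [Filter.mem_inf_of_left h,
        Filter.mem_inf_of_right (Filter.mem_principal_self s)] with w hw1 hw2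
      exact hw1 hw2
  exact (HereditarilyLindelofSpace.isHereditarilyLindelof_univ.isLindelof_subset
    (subset_univ s)).countable hdisc

/-- A Wetzel family has cardinality at least the continuum. -/
lemma continuum_le_wetzel {F : Set (ℂ → ℂ)} (hF : IsWetzel F) :
    Cardinal.continuum ≤ #F := by
  by_contra hlt
  push_neg at hlt
  -- the union of all agreement sets of distinct pairs in F is small
  set E : F × F → Set ℂ := fun p =>
    {z : ℂ | (p.1 : ℂ → ℂ) z = (p.2 : ℂ → ℂ) z ∧ (p.1 : ℂ → ℂ) ≠ (p.2 : ℂ → ℂ)}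
  have hEcount : ∀ p, (E p).Countable := by
    intro p
    by_cases h : (p.1 : ℂ → ℂ) = (p.2 : ℂ → ℂ)
    · have : E p = ∅ := by
        ext z; simp [E, h]
      simp [this]
    · exact (countable_agreement (hF.1 _ p.1.2) (hF.1 _ p.2.2) h).mono
        (fun z hz => hz.1)
  have hT : #(⋃ p, E p) < continuum := by
    calc #(⋃ p, E p) ≤ #(F × F) * ⨆ p, #(E p) := mk_iUnion_le E
      _ ≤ #(F × F) * ℵ₀ := by
          gcongr
          exact ciSup_le' fun p => (hEcount p).le_aleph0
      _ < continuum := by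
          apply mul_lt_of_lt aleph0_le_continuum _ aleph0_lt_continuum
          rw [mk_prod]
          simp only [lift_id]
          exact mul_lt_of_lt aleph0_le_continuum hlt hlt
  have hex : ∃ z : ℂ, z ∉ ⋃ p, E p := by
    by_contra h
    push_neg at h
    have hle : continuum ≤ #(⋃ p, E p) := by
      have heq : (⋃ p, E p) = Set.univ := Set.eq_univ_of_forall h
      rw [heq, mk_univ, mk_complex]
    exact absurd (hle.trans_lt hT) (lt_irrefl _)
  obtain ⟨z, hz⟩ := hex
  have hinj : Set.InjOn (fun f : ℂ → ℂ => f z) F := by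
    intro f hf g hg hfg
    by_contra hne
    exact hz (mem_iUnion.mpr ⟨(⟨f, hf⟩, ⟨g, hg⟩), hfg, hne⟩)
  have := hF.2 z
  rw [mk_image_eq_of_injOn _ _ hinj] at this
  exact lt_irrefl _ this

theorem wetzel_small_fibers (F : Set (ℂ → ℂ)) (hF : IsWetzel F)
    (lam : Cardinal) (hlam : lam < Cardinal.continuum) :
    Cardinal.mk {z : ℂ | Cardinal.mk ((fun f : ℂ → ℂ => f z) '' F) < lam} <
      Cardinal.continuum := by
  -- choose a subfamily G of F of size lam
  obtain ⟨G, hGF, hGcard⟩ := le_mk_iff_exists_subset.mp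
    (hlam.le.trans (continuum_le_wetzel hF))
  set E : G × G → Set ℂ := fun p =>
    {z : ℂ | (p.1 : ℂ → ℂ) z = (p.2 : ℂ → ℂ) z ∧ (p.1 : ℂ → ℂ) ≠ (p.2 : ℂ → ℂ)}
  have hEcount : ∀ p, (E p).Countable := by
    intro p
    by_cases h : (p.1 : ℂ → ℂ) = (p.2 : ℂ → ℂ)
    · have : E p = ∅ := by ext z; simp [E, h]
      simp [this]
    · exact (countable_agreement (hF.1 _ (hGF p.1.2)) (hF.1 _ (hGF p.2.2)) h).mono
        (fun z hz => hz.1)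
  have hsub : {z : ℂ | Cardinal.mk ((fun f : ℂ → ℂ => f z) '' F) < lam} ⊆ ⋃ p, E p := by
    intro z hz
    -- evaluation at z is not injective on G
    have hnotinj : ¬ Set.InjOn (fun f : ℂ → ℂ => f z) G := by
      intro hinj
      have h1 : #((fun f : ℂ → ℂ => f z) '' G) = #G := mk_image_eq_of_injOn _ _ hinj
      have h2 : #((fun f : ℂ → ℂ => f z) '' G) ≤ #((fun f : ℂ → ℂ => f z) '' F) :=
        mk_le_mk_of_subset (image_mono hGF)
      rw [h1, hGcard] at h2
      exact absurd (h2.trans_lt hz) (lt_irrefl _)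
    rw [Set.InjOn] at hnotinj
    push_neg at hnotinj
    obtain ⟨f, hf, g, hg, hfg, hne⟩ := hnotinj
    exact mem_iUnion.mpr ⟨(⟨f, hf⟩, ⟨g, hg⟩), hfg, hne⟩
  calc #{z : ℂ | Cardinal.mk ((fun f : ℂ → ℂ => f z) '' F) < lam}
      ≤ #(⋃ p, E p) := mk_le_mk_of_subset hsub
    _ ≤ #(G × G) * ⨆ p, #(E p) := mk_iUnion_le E
    _ ≤ #(G × G) * ℵ₀ := by
        gcongr
        exact ciSup_le' fun p => (hEcount p).le_aleph0
    _ < continuum := by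
        apply mul_lt_of_lt aleph0_le_continuum _ aleph0_lt_continuum
        rw [mk_prod]
        simp only [lift_id, hGcard]
        exact mul_lt_of_lt aleph0_le_continuum hlam hlam
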